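/- Let 𝔽 be ℝ or ℂ, X a Banach space over 𝔽, and 𝒜 a standard operator algebra in B(X). If A, B ∈ 𝒜 satisfy ATB = BTA for all T ∈ 𝒜, then A and B are linearly dependent. -/

import Mathlib

set_option synthInstance.maxHeartbeats 400000
set_option maxHeartbeats 1000000

/-- The commutator `[A,B] = AB - BA` in a ring. -/
def bracket1 {R : Type*} [Ring R] (A B : R) : R := A * B - B * A

/-- The 3-commutator `[A,B]₃ = [[[A,B],B],B]` in a ring. -/
def bracket3 {R : Type*} [Ring R] (A B : R) : R := bracket1 (bracket1 (bracket1 A B) B) B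

/-- A standard operator algebra on a normed space `X` over `𝕜` is a subalgebra of
`B(X)` (automatically containing the identity) containing all finite-rank operators. -/
def IsStandardOperatorAlgebra (𝕜 : Type*) [RCLike 𝕜] (X : Type*)
    [NormedAddCommGroup X] [NormedSpace 𝕜 X]
    (𝒜 : Subalgebra 𝕜 (X →L[𝕜] X)) : Prop :=
  ∀ T : X →L[𝕜] X, FiniteDimensional 𝕜 (LinearMap.range (T : X →ₗ[𝕜] X)) → T ∈ 𝒜

theorem stmt_3 {𝕜 X : Type*} [RCLike 𝕜] [NormedAddCommGroup X] [NormedSpace 𝕜 X]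
    [CompleteSpace X]
    (𝒜 : Subalgebra 𝕜 (X →L[𝕜] X)) (h𝒜 : IsStandardOperatorAlgebra 𝕜 X 𝒜)
    (A B : 𝒜) (h : ∀ T : 𝒜, A * T * B = B * T * A) :
    ∃ a b : 𝕜, (a ≠ 0 ∨ b ≠ 0) ∧ a • A + b • B = 0 := by
  by_cases hA : A = 0
  · exact ⟨1, 0, Or.inl one_ne_zero, by simp [hA]⟩
  · have hA' : (A : X →L[𝕜] X) ≠ 0 := fun h0 => hA (Subtype.ext h0)
    obtain ⟨v₀, hv₀⟩ : ∃ v, (A : X →L[𝕜] X) v ≠ 0 := by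
      by_contra hc; push_neg at hc
      exact hA' (ContinuousLinearMap.ext fun v => by simp [hc v])
    obtain ⟨g, hg1, hg2⟩ := exists_dual_vector 𝕜 _ (norm_ne_zero_iff.2 hv₀)
    have key : ∀ (f : X →L[𝕜] 𝕜) (x v : X),
        f ((B : X →L[𝕜] X) v) • (A : X →L[𝕜] X) x
          = f ((A : X →L[𝕜] X) v) • (B : X →L[𝕜] X) x := by
      intro f x v
      set T : X →L[𝕜] X := f.smulRight x with hTdef
      have hT : T ∈ 𝒜 := by
        apply h𝒜
        have hle : LinearMap.range (T : X →ₗ[𝕜] X) ≤ 𝕜 ∙ x := by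
          rintro y ⟨w, rfl⟩
          exact Submodule.mem_span_singleton.2 ⟨f w, rfl⟩
        exact Submodule.finiteDimensional_of_le hle
      have h1 := h ⟨T, hT⟩
      have h2 := congrArg (Subtype.val) h1
      have h3 := congrFun (congrArg DFunLike.coe h2) v
      simpa [hTdef, ContinuousLinearMap.mul_apply] using h3
    have hgA : g ((A : X →L[𝕜] X) v₀) ≠ 0 := by
      rw [hg2]
      exact_mod_cast norm_ne_zero_iff.2 hv₀
    set c : 𝕜 := g ((B : X →L[𝕜] X) v₀) / g ((A : X →L[𝕜] X) v₀) with hc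
    refine ⟨c, -1, Or.inr (by norm_num), ?_⟩
    apply Subtype.ext
    push_cast
    ext x
    have hx := key g x v₀
    have hBx : (B : X →L[𝕜] X) x = c • (A : X →L[𝕜] X) x := by
      calc (B : X →L[𝕜] X) x
          = (g ((A : X →L[𝕜] X) v₀))⁻¹ • (g ((A : X →L[𝕜] X) v₀) • (B : X →L[𝕜] X) x) :=
            (inv_smul_smul₀ hgA _).symm
        _ = c • (A : X →L[𝕜] X) x := by rw [← hx, smul_smul, ← div_eq_inv_mul]
    simp [hBx]
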